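/- There exists a geometric realization (p, L) of the Gray configuration in the plane together with a point c ∈ ℝ² such that the counterclockwise rotation ρ by 2π/3 about c satisfies ρ(p(v)) = p(v + (2,1,0)) for every v ∈ (ℤ/3ℤ)³, and ρ maps the line L(ℓ) onto the line L(ℓ + (2,1,0)) for every combinatorial line ℓ. (This is the polycyclic realization of the Gray configuration with ℤ₃ rotational symmetry whose reduced Levi graph is the graph GG.) -/

import Mathlib

open Real

noncomputable section

abbrev Pt := EuclideanSpace ℝ (Fin 2)

def pt (x y : ℝ) : Pt := (WithLp.equiv 2 _).symm ![x, y]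

/-- The affine line through two points `A` and `B`. -/
def lineThrough (A B : Pt) : Set Pt := {P | ∃ t : ℝ, P = A + t • (B - A)}

/-- A subset of the plane is an affine line iff it is the line through two distinct points. -/
def IsAffineLine (S : Set Pt) : Prop := ∃ A B : Pt, A ≠ B ∧ S = lineThrough A B

/-- Counterclockwise rotation by angle `θ` about the point `c`. -/
def rotAbout (θ : ℝ) (c p : Pt) : Pt :=
  pt (c 0 + Real.cos θ * (p 0 - c 0) - Real.sin θ * (p 1 - c 1))
     (c 1 + Real.sin θ * (p 0 - c 0) + Real.cos θ * (p 1 - c 1))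

/-- Points of the Gray configuration: elements of (ℤ/3ℤ)³. -/
abbrev GPt := Fin 3 → ZMod 3

/-- The combinatorial line through `v` in coordinate direction `k`. -/
def grayLine (v : GPt) (k : Fin 3) : Set GPt :=
  {w | ∃ t : ZMod 3, w = v + t • (Pi.single k 1 : GPt)}

/-- The combinatorial lines of the Gray configuration. -/
def IsGrayLine (ℓ : Set GPt) : Prop := ∃ v k, ℓ = grayLine v k

/-- The type of combinatorial lines of the Gray configuration. -/
abbrev GrayLine := {ℓ : Set GPt // IsGrayLine ℓ}

/-! ### Auxiliary integer arithmetic in ℤ[√3] × ℤ[√3] -/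

abbrev Q2 := ℤ × ℤ
abbrev C4 := Q2 × Q2

def q2add (u v : Q2) : Q2 := (u.1 + v.1, u.2 + v.2)
def q2sub (u v : Q2) : Q2 := (u.1 - v.1, u.2 - v.2)
def q2mul (u v : Q2) : Q2 := (u.1 * v.1 + 3 * u.2 * v.2, u.1 * v.2 + u.2 * v.1)

def c4mul (a b : C4) : C4 :=
  (q2sub (q2mul a.1 b.1) (q2mul a.2 b.2), q2add (q2mul a.1 b.2) (q2mul a.2 b.1))

def OmT (t : ZMod 3) : C4 :=
  if t = 0 then ((2,0),(0,0)) else if t = 1 then ((-1,0),(0,1)) else ((-1,0),(0,-1))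
def XhT (t : ZMod 3) : C4 :=
  if t = 0 then ((258,0),(224,0)) else if t = 1 then ((66,8),(-112,14)) else ((66,-8),(-112,-14))
def YhT (t : ZMod 3) : C4 :=
  if t = 0 then ((36,0),(8,0)) else if t = 1 then ((12,4),(-4,2)) else ((12,-4),(-4,-2))

def PZ (a b c : ZMod 3) : C4 := c4mul (OmT b) (c4mul (XhT (a + b)) (YhT c))

def crossZ (W A B : C4) : Q2 :=
  q2sub (q2mul (q2sub W.1 A.1) (q2sub B.2 A.2)) (q2mul (q2sub W.2 A.2) (q2sub B.1 A.1))

def dd (k j : Fin 3) : ZMod 3 := if j = k then 1 else 0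

set_option maxRecDepth 100000 in
theorem FACT_inj : ∀ a b c a' b' c' : ZMod 3,
    PZ a b c = PZ a' b' c' → a = a' ∧ b = b' ∧ c = c' := by decide

set_option maxRecDepth 100000 in
theorem FACT_rot : ∀ a b c : ZMod 3,
    -(PZ a b c).1.1 - 3*(PZ a b c).2.2 = 2*(PZ (a+2) (b+1) c).1.1 ∧
    -(PZ a b c).1.2 - (PZ a b c).2.1 = 2*(PZ (a+2) (b+1) c).1.2 ∧
    3*(PZ a b c).1.2 - (PZ a b c).2.1 = 2*(PZ (a+2) (b+1) c).2.1 ∧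
    (PZ a b c).1.1 - (PZ a b c).2.2 = 2*(PZ (a+2) (b+1) c).2.2 := by decide

set_option maxRecDepth 1000000 in
theorem FACT_inc : ∀ (a b c a' b' c' : ZMod 3) (k : Fin 3),
    crossZ (PZ a' b' c') (PZ a b c) (PZ (a + dd k 0) (b + dd k 1) (c + dd k 2)) = (0,0) ↔
      (((0:Fin 3) = k ∨ a' = a) ∧ ((1:Fin 3) = k ∨ b' = b) ∧ ((2:Fin 3) = k ∨ c' = c)) := by
  decide

/-! ### Evaluation into ℝ -/

def ev (q : Q2) : ℝ := (q.1 : ℝ) + (q.2 : ℝ) * Real.sqrt 3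

lemma sqrt3_sq : Real.sqrt 3 * Real.sqrt 3 = 3 := Real.mul_self_sqrt (by norm_num)

lemma irr3 : Irrational (Real.sqrt 3) := by
  simpa using (Nat.prime_three).irrational_sqrt

lemma ev_sub (u v : Q2) : ev (q2sub u v) = ev u - ev v := by
  simp [ev, q2sub]; push_cast; ring

lemma ev_mul (u v : Q2) : ev (q2mul u v) = ev u * ev v := by
  simp only [ev, q2mul]
  push_cast
  linear_combination (-(u.2 : ℝ) * v.2) * sqrt3_sq

lemma ev_eq_zero {q : Q2} : ev q = 0 ↔ q = (0, 0) := by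
  constructor
  · intro h
    by_cases h2 : q.2 = 0
    · have h1 : (q.1 : ℝ) = 0 := by simpa [ev, h2] using h
      have : q.1 = 0 := by exact_mod_cast h1
      cases q; simp_all
    · exfalso
      apply irr3
      refine ⟨(-q.1 : ℚ) / (q.2 : ℚ), ?_⟩
      have h2' : (q.2 : ℝ) ≠ 0 := Int.cast_ne_zero.mpr h2
      push_cast
      field_simp
      simp only [ev] at h
      linarith
  · rintro h; simp [h, ev]

lemma ev_inj {u v : Q2} (h : ev u = ev v) : u = v := by
  have : ev (q2sub u v) = 0 := by rw [ev_sub]; linarith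
  have h0 := ev_eq_zero.mp this
  simp only [q2sub, Prod.mk.injEq, sub_eq_zero] at h0
  exact Prod.ext h0.1 h0.2

/-! ### Point/line helpers in the plane -/

lemma ptApp0 (x y : ℝ) : pt x y 0 = x := rfl
lemma ptApp1 (x y : ℝ) : pt x y 1 = y := rfl

lemma pt_eta (A : Pt) : pt (A 0) (A 1) = A := by
  ext i; fin_cases i <;> rfl

lemma pt_inj {x y x' y' : ℝ} : pt x y = pt x' y' ↔ x = x' ∧ y = y' := by
  constructor
  · intro h
    exact ⟨congrArg (fun P : Pt => P 0) h, congrArg (fun P : Pt => P 1) h⟩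
  · rintro ⟨rfl, rfl⟩; rfl

lemma apply_comb (A B : Pt) (t : ℝ) (i : Fin 2) :
    (A + t • (B - A)) i = A i + t * (B i - A i) := by
  simp [PiLp.add_apply]

lemma mem_lineThrough_pt {px py ax ay bx b_y : ℝ} :
    pt px py ∈ lineThrough (pt ax ay) (pt bx b_y) ↔
      ∃ t : ℝ, px = ax + t * (bx - ax) ∧ py = ay + t * (b_y - ay) := by
  constructor
  · rintro ⟨t, h⟩
    refine ⟨t, ?_, ?_⟩
    · have := congrArg (fun P : Pt => P 0) h
      simpa [apply_comb, ptApp0] using this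
    · have := congrArg (fun P : Pt => P 1) h
      simpa [apply_comb, ptApp1] using this
  · rintro ⟨t, h0, h1⟩
    refine ⟨t, ?_⟩
    ext i; fin_cases i
    · simpa [apply_comb, ptApp0] using h0
    · simpa [apply_comb, ptApp1] using h1

lemma exists_t_iff_cross {px py ax ay bx b_y : ℝ}
    (hne : ¬(bx - ax = 0 ∧ b_y - ay = 0)) :
    (∃ t : ℝ, px = ax + t * (bx - ax) ∧ py = ay + t * (b_y - ay)) ↔
      (px - ax) * (b_y - ay) - (py - ay) * (bx - ax) = 0 := by
  constructor
  · rintro ⟨t, rfl, rfl⟩; ring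
  · intro h
    by_cases hbx : bx - ax = 0
    · have hby : b_y - ay ≠ 0 := fun hb => hne ⟨hbx, hb⟩
      refine ⟨(py - ay) / (b_y - ay), ?_, ?_⟩
      · have hx : px - ax = 0 := by
          have := h; rw [hbx] at this; simp at this
          rcases this with h' | h'
          · exact h'
          · exact absurd h' hby
        rw [hbx]; linarith
      · field_simp
        ring
    · refine ⟨(px - ax) / (bx - ax), ?_, ?_⟩
      · field_simp
        ring
      · field_simp
        linarith [h]

lemma lineThrough_trans {A B C D : Pt} (hC : C ∈ lineThrough A B)
    (hD : D ∈ lineThrough A B) (hCD : C ≠ D) :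
    lineThrough C D = lineThrough A B := by
  obtain ⟨s, rfl⟩ := hC
  obtain ⟨u, rfl⟩ := hD
  have hsu : u - s ≠ 0 := by
    intro h
    apply hCD
    have : u = s := by linarith [sub_eq_zero.mp h]
    rw [this]
  ext P
  constructor
  · rintro ⟨t, rfl⟩
    refine ⟨s + t * (u - s), ?_⟩
    module
  · rintro ⟨r, rfl⟩
    refine ⟨(r - s) / (u - s), ?_⟩
    have h' : -s + u ≠ 0 := by intro h; apply hsu; linarith
    match_scalars <;> field_simp <;> ring

/-! ### Gray line combinatorics -/

lemma mem_grayLine {w v : GPt} {k : Fin 3} :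
    w ∈ grayLine v k ↔ ∀ j, j = k ∨ w j = v j := by
  constructor
  · rintro ⟨t, rfl⟩ j
    by_cases hj : j = k
    · exact Or.inl hj
    · right
      simp [Pi.single_eq_of_ne hj]
  · intro h
    refine ⟨w k - v k, ?_⟩
    funext j
    by_cases hj : j = k
    · subst hj; simp [Pi.single_eq_same]
    · have := (h j).resolve_left hj
      simp [Pi.single_eq_of_ne hj, this]

lemma grayLine_image (v : GPt) (k : Fin 3) (g : GPt) :
    (fun u => u + g) '' grayLine v k = grayLine (v + g) k := by
  ext w
  constructor
  · rintro ⟨u, hu, rfl⟩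
    rw [mem_grayLine] at hu ⊢
    intro j
    rcases hu j with h | h
    · exact Or.inl h
    · right; simp [h]
  · intro hw
    rw [mem_grayLine] at hw
    refine ⟨w - g, ?_, by simp⟩
    rw [mem_grayLine]
    intro j
    rcases hw j with h | h
    · exact Or.inl h
    · right
      have : w j = v j + g j := by simpa using h
      simp [this]

lemma self_mem_grayLine (v : GPt) (k : Fin 3) : v ∈ grayLine v k :=
  mem_grayLine.mpr fun j => Or.inr rfl

lemma shift_mem_grayLine (v : GPt) (k : Fin 3) : v + Pi.single k 1 ∈ grayLine v k := by
  rw [mem_grayLine]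
  intro j
  by_cases hj : j = k
  · exact Or.inl hj
  · right; simp [Pi.single_eq_of_ne hj]

lemma shift_ne (v : GPt) (k : Fin 3) : v + Pi.single k 1 ≠ v := by
  intro h
  have := congrFun h k
  simp [Pi.single_eq_same] at this

/-! ### The realization -/

def P' (v : GPt) : C4 := PZ (v 0) (v 1) (v 2)

def pp (v : GPt) : Pt := pt (ev (P' v).1) (ev (P' v).2)

lemma P'_shift (v : GPt) (k : Fin 3) :
    P' (v + Pi.single k 1) = PZ (v 0 + dd k 0) (v 1 + dd k 1) (v 2 + dd k 2) := by
  simp [P', Pi.single_apply, dd]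

lemma pp_inj : Function.Injective pp := by
  intro v w h
  rw [pp, pp, pt_inj] at h
  have h1 : (P' v).1 = (P' w).1 := ev_inj h.1
  have h2 : (P' v).2 = (P' w).2 := ev_inj h.2
  have hP : P' v = P' w := Prod.ext h1 h2
  obtain ⟨e0, e1, e2⟩ := FACT_inj _ _ _ _ _ _ hP
  funext j
  fin_cases j <;> assumption

lemma incidence (v : GPt) (k : Fin 3) (w : GPt) :
    pp w ∈ lineThrough (pp v) (pp (v + Pi.single k 1)) ↔ w ∈ grayLine v k := by
  have hBA : P' (v + Pi.single k 1) ≠ P' v := by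
    rw [P'_shift]
    intro hEq
    obtain ⟨h0, h1, h2⟩ := FACT_inj _ _ _ _ _ _ hEq
    fin_cases k
    · simp only [dd, if_pos rfl] at h0
      exact one_ne_zero (add_eq_left.mp h0)
    · simp only [dd, if_pos rfl] at h1
      exact one_ne_zero (add_eq_left.mp h1)
    · simp only [dd, if_pos rfl] at h2
      exact one_ne_zero (add_eq_left.mp h2)
  have hne : ¬(ev (P' (v + Pi.single k 1)).1 - ev (P' v).1 = 0 ∧
      ev (P' (v + Pi.single k 1)).2 - ev (P' v).2 = 0) := by
    rintro ⟨hx, hy⟩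
    apply hBA
    exact Prod.ext (ev_inj (by linarith)) (ev_inj (by linarith))
  rw [pp, pp, pp, mem_lineThrough_pt, exists_t_iff_cross hne]
  have hcr : (ev (P' w).1 - ev (P' v).1) * (ev (P' (v + Pi.single k 1)).2 - ev (P' v).2) -
      (ev (P' w).2 - ev (P' v).2) * (ev (P' (v + Pi.single k 1)).1 - ev (P' v).1) =
      ev (crossZ (P' w) (P' v) (P' (v + Pi.single k 1))) := by
    simp only [crossZ, ev_sub, ev_mul]
  rw [hcr, ev_eq_zero]
  rw [P'_shift]
  rw [show P' w = PZ (w 0) (w 1) (w 2) from rfl, show P' v = PZ (v 0) (v 1) (v 2) from rfl]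
  rw [FACT_inc, mem_grayLine]
  constructor
  · rintro ⟨h0, h1, h2⟩ j
    fin_cases j
    · simpa using h0
    · simpa using h1
    · simpa using h2
  · intro h
    exact ⟨h 0, h 1, h 2⟩

/-! ### Rotation -/

lemma cos23 : Real.cos (2 * π / 3) = -(1/2) := by
  rw [show (2 * π / 3 : ℝ) = π - π/3 by ring, Real.cos_pi_sub, Real.cos_pi_div_three]

lemma sin23 : Real.sin (2 * π / 3) = Real.sqrt 3 / 2 := by
  rw [show (2 * π / 3 : ℝ) = π - π/3 by ring, Real.sin_pi_sub, Real.sin_pi_div_three]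

lemma rot_pp (v : GPt) :
    rotAbout (2 * π / 3) (pt 0 0) (pp v) = pp (v + ![2,1,0]) := by
  have hP : P' (v + ![2,1,0]) = PZ (v 0 + 2) (v 1 + 1) (v 2) := by
    simp [P']
  obtain ⟨e1, e2, e3, e4⟩ := FACT_rot (v 0) (v 1) (v 2)
  have hPv : PZ (v 0) (v 1) (v 2) = P' v := rfl
  rw [hPv] at e1 e2 e3 e4
  unfold pp rotAbout
  rw [hP, pt_inj]
  simp only [ptApp0, ptApp1, cos23, sin23, ev]
  set s := Real.sqrt 3 with hs
  have E1 : (-(((P' v).1.1 : ℝ)) - 3*((P' v).2.2 : ℝ)) =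
      2*((PZ (v 0 + 2) (v 1 + 1) (v 2)).1.1 : ℝ) := by exact_mod_cast e1
  have E2 : (-(((P' v).1.2 : ℝ)) - ((P' v).2.1 : ℝ)) =
      2*((PZ (v 0 + 2) (v 1 + 1) (v 2)).1.2 : ℝ) := by exact_mod_cast e2
  have E3 : (3*(((P' v).1.2 : ℝ)) - ((P' v).2.1 : ℝ)) =
      2*((PZ (v 0 + 2) (v 1 + 1) (v 2)).2.1 : ℝ) := by exact_mod_cast e3
  have E4 : ((((P' v).1.1 : ℝ)) - ((P' v).2.2 : ℝ)) =
      2*((PZ (v 0 + 2) (v 1 + 1) (v 2)).2.2 : ℝ) := by exact_mod_cast e4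
  have h3 : s * s = 3 := sqrt3_sq
  constructor
  · linear_combination (1/2)*E1 + (s/2)*E2 - (((P' v).2.2 : ℝ)/2)*h3
  · linear_combination (1/2)*E3 + (s/2)*E4 + (((P' v).1.2 : ℝ)/2)*h3

lemma pt_comb (x y x' y' t : ℝ) :
    pt x y + t • (pt x' y' - pt x y) = pt (x + t*(x'-x)) (y + t*(y'-y)) := by
  ext i
  rw [apply_comb]
  fin_cases i <;> rfl

lemma rot_affine (A B : Pt) (t : ℝ) :
    rotAbout (2*π/3) (pt 0 0) (A + t • (B - A)) =
      rotAbout (2*π/3) (pt 0 0) A +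
        t • (rotAbout (2*π/3) (pt 0 0) B - rotAbout (2*π/3) (pt 0 0) A) := by
  unfold rotAbout
  rw [pt_comb, pt_inj, apply_comb, apply_comb]
  simp only [ptApp0, ptApp1]
  constructor <;> ring

lemma lineThrough_image (f : Pt → Pt)
    (hf : ∀ (A B : Pt) (t : ℝ), f (A + t • (B - A)) = f A + t • (f B - f A)) (A B : Pt) :
    f '' lineThrough A B = lineThrough (f A) (f B) := by
  ext P
  constructor
  · rintro ⟨Q, ⟨t, rfl⟩, rfl⟩
    exact ⟨t, hf A B t⟩
  · rintro ⟨t, rfl⟩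
    exact ⟨A + t • (B - A), ⟨t, rfl⟩, hf A B t⟩

/-! ### Choice of representatives for lines -/

def lv (ℓ : GrayLine) : GPt := ℓ.2.choose
def lk (ℓ : GrayLine) : Fin 3 := ℓ.2.choose_spec.choose
lemma lspec (ℓ : GrayLine) : ℓ.1 = grayLine (lv ℓ) (lk ℓ) := ℓ.2.choose_spec.choose_spec

def LL (ℓ : GrayLine) : Set Pt := lineThrough (pp (lv ℓ)) (pp (lv ℓ + Pi.single (lk ℓ) 1))

lemma inc_LL (v : GPt) (ℓ : GrayLine) : pp v ∈ LL ℓ ↔ v ∈ ℓ.1 := by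
  rw [LL, incidence, lspec]

theorem gray_polycyclic_realization_GG_RLG :
    ∃ (p : GPt → Pt) (L : GrayLine → Set Pt) (c : Pt),
      Function.Injective p ∧ Function.Injective L ∧
      (∀ ℓ : GrayLine, IsAffineLine (L ℓ)) ∧
      (∀ (v : GPt) (ℓ : GrayLine), p v ∈ L ℓ ↔ v ∈ ℓ.1) ∧
      (∀ v : GPt, rotAbout (2 * π / 3) c (p v) = p (v + ![2, 1, 0])) ∧
      (∀ ℓ ℓ' : GrayLine, ℓ'.1 = (fun u => u + ![2, 1, 0]) '' ℓ.1 →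
        rotAbout (2 * π / 3) c '' L ℓ = L ℓ') := by
  refine ⟨pp, LL, pt 0 0, pp_inj, ?_, ?_, inc_LL, rot_pp, ?_⟩
  · intro ℓ ℓ' h
    apply Subtype.ext
    ext w
    rw [← inc_LL w ℓ, ← inc_LL w ℓ', h]
  · intro ℓ
    exact ⟨pp (lv ℓ), pp (lv ℓ + Pi.single (lk ℓ) 1),
      fun h => shift_ne (lv ℓ) (lk ℓ) (pp_inj h.symm), rfl⟩
  · intro ℓ ℓ' h
    have h2 : ℓ'.1 = grayLine (lv ℓ + ![2,1,0]) (lk ℓ) := by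
      rw [h, lspec ℓ, grayLine_image]
    have hC : pp (lv ℓ + ![2,1,0]) ∈ LL ℓ' := by
      rw [inc_LL, h2]; exact self_mem_grayLine _ _
    have hD : pp (lv ℓ + Pi.single (lk ℓ) 1 + ![2,1,0]) ∈ LL ℓ' := by
      rw [inc_LL, h2]
      have : lv ℓ + Pi.single (lk ℓ) 1 + ![2,1,0] =
          (lv ℓ + ![2,1,0]) + Pi.single (lk ℓ) 1 := by
        abel
      rw [this]
      exact shift_mem_grayLine _ _
    have hCD : pp (lv ℓ + ![2,1,0]) ≠ pp (lv ℓ + Pi.single (lk ℓ) 1 + ![2,1,0]) := by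
      intro hh
      have := pp_inj hh
      apply shift_ne (lv ℓ + ![2,1,0]) (lk ℓ)
      rw [show (lv ℓ + ![2,1,0]) + Pi.single (lk ℓ) 1 =
        lv ℓ + Pi.single (lk ℓ) 1 + ![2,1,0] by abel]
      exact this.symm
    calc rotAbout (2 * π / 3) (pt 0 0) '' LL ℓ
        = lineThrough (pp (lv ℓ + ![2,1,0]))
            (pp (lv ℓ + Pi.single (lk ℓ) 1 + ![2,1,0])) := by
          rw [LL, lineThrough_image _ rot_affine, rot_pp, rot_pp]
      _ = LL ℓ' := lineThrough_trans hC hD hCD
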